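/- Let A be a complex Banach algebra, σ : A → A a bounded algebra endomorphism, and d : A → A a bounded σ-derivation with d ∘ σ = σ ∘ d = d. If a ∈ A satisfies d²(a) = 0, then d(a) is quasinilpotent, i.e. the spectral radius of d(a) is 0. -/

import Mathlib

open Filter Function
open scoped ENNReal NNReal Topology

/-- Kleinecke–Shirokov type theorem: Let `A` be a complex Banach
algebra, `σ` a bounded endomorphism, `d` a bounded `σ`-derivation with
`d ∘ σ = σ ∘ d = d`. If `d²(a) = 0`, then `d(a)` is quasinilpotent. -/
theorem stmt_16 {A : Type*} [NormedRing A] [NormedAlgebra ℂ A] [CompleteSpace A]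
    (σ d : A →L[ℂ] A)
    (hσ : ∀ a b : A, σ (a * b) = σ a * σ b)
    (hder : ∀ a b : A, d (a * b) = d a * σ b + σ a * d b)
    (hdσ : ∀ x : A, d (σ x) = d x) (hσd : ∀ x : A, σ (d x) = d x)
    (a : A) (ha : d (d a) = 0) :
    spectralRadius ℂ (d a) = 0 := by
  set b : A := d a with hb
  have hσb : σ b = b := hσd a
  have hdb : d b = 0 := ha
  -- `d` applied to iterates of `σ`
  have hdσn : ∀ (n : ℕ) (x : A), d ((⇑σ)^[n] x) = d x := by
    intro n
    induction n with
    | zero => intro x; rfl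
    | succ n ih =>
      intro x
      rw [Function.iterate_succ_apply', hdσ, ih]
  -- `σ` applied to iterates of `d` (at least one)
  have hσdn : ∀ (n : ℕ) (x : A), σ ((⇑d)^[n + 1] x) = (⇑d)^[n + 1] x := by
    intro n x
    rw [Function.iterate_succ_apply', hσd]
  -- `d` of powers of `b` vanishes
  have hdbpow : ∀ k : ℕ, d (b ^ (k + 1)) = 0 := by
    intro k
    induction k with
    | zero => simpa using hdb
    | succ k ih =>
      rw [pow_succ', hder, hdb, zero_mul, zero_add, hσb, ih, mul_zero]
  -- key Leibniz-type formula for `d^[m+2] (a * y)`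
  have keyQ : ∀ (m : ℕ) (y : A), (⇑d)^[m + 2] (a * y) =
      (⇑σ)^[m + 2] a * (⇑d)^[m + 2] y + (m + 2) • (b * (⇑d)^[m + 1] y) := by
    intro m
    induction m with
    | zero =>
      intro y
      show d (d (a * y)) = _
      rw [hder]
      simp only [map_add, hder, hdσ, hσd, hdb, ha, ← hb, zero_mul, zero_add, hσb]
      show b * d y + (b * d y + σ (σ a) * d (d y))
        = σ (σ a) * d (d y) + (2 : ℕ) • (b * d y)
      rw [two_nsmul]
      abel
    | succ m ih =>
      intro y
      have e1 : (⇑d)^[m + 1 + 2] (a * y) = d ((⇑d)^[m + 2] (a * y)) :=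
        Function.iterate_succ_apply' _ _ _
      rw [e1, ih y, map_add, map_nsmul, hder, hder, hdb, zero_mul, zero_add, hσb,
        hdσn, hσdn (m + 1),
        ← Function.iterate_succ_apply' (⇑d) (m + 2) y,
        ← Function.iterate_succ_apply' (⇑σ) (m + 2) a,
        ← Function.iterate_succ_apply' (⇑d) (m + 1) y, ← hb]
      simp only [show m + 1 + 2 = m + 2 + 1 from rfl, show m + 1 + 1 = m + 2 from rfl]
      rw [succ_nsmul]
      simp only [Nat.succ_eq_add_one, show m + 1 + 1 = m + 2 from rfl]
      simp only [add_nsmul]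
      abel
  -- the main formula : `d^[n+1] (a^(n+1)) = (n+1)! • b^(n+1)` and the next
  -- iterate vanishes
  have main : ∀ n : ℕ, (⇑d)^[n + 1] (a ^ (n + 1)) = (n + 1).factorial • b ^ (n + 1) ∧
      (⇑d)^[n + 2] (a ^ (n + 1)) = 0 := by
    intro n
    induction n with
    | zero =>
      constructor
      · show d (a ^ 1) = _
        simp [pow_one, ← hb]
      · show d (d (a ^ 1)) = 0
        rw [pow_one, ← hb, ha]
    | succ n ih =>
      have hpow : a ^ (n + 2) = a * a ^ (n + 1) := pow_succ' a (n + 1)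
      have first : (⇑d)^[n + 2] (a ^ (n + 2)) = (n + 2).factorial • b ^ (n + 2) := by
        rw [hpow, keyQ n (a ^ (n + 1)), ih.2, mul_zero, zero_add, ih.1,
          mul_smul_comm, smul_smul, (pow_succ' b (n + 1)).symm,
          show (n + 2) * (n + 1).factorial = (n + 2).factorial from
            (Nat.factorial_succ (n + 1)).symm]
      refine ⟨by simpa using first, ?_⟩
      have e2 : (⇑d)^[n + 3] (a ^ (n + 2)) = d ((⇑d)^[n + 2] (a ^ (n + 2))) :=
        Function.iterate_succ_apply' _ _ _
      have h0 : (⇑d)^[n + 1 + 2] (a ^ (n + 1 + 1)) = (⇑d)^[n + 3] (a ^ (n + 2)) := rfl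
      rw [h0, e2, first, map_nsmul, hdbpow (n + 1), smul_zero]
  -- norm bound for iterates of `d`
  have opb : ∀ (n : ℕ) (x : A), ‖(⇑d)^[n] x‖ ≤ ‖d‖ ^ n * ‖x‖ := by
    intro n
    induction n with
    | zero => intro x; simp
    | succ n ih =>
      intro x
      rw [Function.iterate_succ_apply', pow_succ]
      calc ‖d ((⇑d)^[n] x)‖ ≤ ‖d‖ * ‖(⇑d)^[n] x‖ := d.le_opNorm _
      _ ≤ ‖d‖ * (‖d‖ ^ n * ‖x‖) := by
            exact mul_le_mul_of_nonneg_left (ih x) (norm_nonneg (d : A →L[ℂ] A))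
      _ = ‖d‖ ^ n * ‖d‖ * ‖x‖ := by ring
  -- the crucial estimate `(n+1)! * ‖b^(n+1)‖ ≤ (‖d‖ * ‖a‖)^(n+1)`
  have key : ∀ n : ℕ, ((n + 1).factorial : ℝ) * ‖b ^ (n + 1)‖ ≤ (‖d‖ * ‖a‖) ^ (n + 1) := by
    intro n
    have h1 : ((n + 1).factorial : ℝ) * ‖b ^ (n + 1)‖ = ‖(⇑d)^[n + 1] (a ^ (n + 1))‖ := by
      rw [(main n).1, ← Nat.cast_smul_eq_nsmul ℝ, norm_smul, Real.norm_natCast]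
    rw [h1, mul_pow]
    calc ‖(⇑d)^[n + 1] (a ^ (n + 1))‖ ≤ ‖d‖ ^ (n + 1) * ‖a ^ (n + 1)‖ := opb _ _
    _ ≤ ‖d‖ ^ (n + 1) * ‖a‖ ^ (n + 1) :=
          mul_le_mul_of_nonneg_left (norm_pow_le' a n.succ_pos) (by positivity)
  -- now the analytic part : Gelfand's formula
  set C : ℝ := ‖d‖ * ‖a‖ with hC
  have hC0 : 0 ≤ C := mul_nonneg (norm_nonneg _) (norm_nonneg _)
  refine tendsto_nhds_unique (spectrum.pow_nnnorm_pow_one_div_tendsto_nhds_spectralRadius b) ?_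
  rw [ENNReal.tendsto_atTop_zero]
  intro ε hε
  set δ : ℝ≥0∞ := min ε 1 with hδ
  have hδ0 : 0 < δ := lt_min hε zero_lt_one
  have hδtop : δ ≠ ⊤ := ne_top_of_le_ne_top ENNReal.one_ne_top (min_le_right _ _)
  set ε' : ℝ≥0 := δ.toNNReal with hε'
  have hε'0 : 0 < ε' := ENNReal.toNNReal_pos hδ0.ne' hδtop
  have hε'le : (ε' : ℝ≥0∞) ≤ ε := by
    rw [hε', ENNReal.coe_toNNReal hδtop]
    exact min_le_left _ _
  have hfac := FloorSemiring.tendsto_pow_div_factorial_atTop (C / (ε' : ℝ))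
  obtain ⟨N, hN⟩ := (Metric.tendsto_atTop.mp hfac) 1 zero_lt_one
  refine ⟨max N 1, fun n hn => ?_⟩
  have hn1 : 1 ≤ n := le_trans (le_max_right _ _) hn
  have hnN : N ≤ n := le_trans (le_max_left _ _) hn
  have hfa : (0 : ℝ) < n.factorial := by positivity
  have h1 : (C / (ε' : ℝ)) ^ n / n.factorial < 1 := by
    have := hN n hnN
    rw [Real.dist_eq, sub_zero] at this
    calc (C / (ε' : ℝ)) ^ n / n.factorial ≤ |(C / (ε' : ℝ)) ^ n / n.factorial| := le_abs_self _
    _ < 1 := this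
  have h2 : C ^ n < (ε' : ℝ) ^ n * n.factorial := by
    rw [div_lt_one hfa, div_pow, div_lt_iff₀ (by positivity)] at h1
    calc C ^ n < n.factorial * (ε' : ℝ) ^ n := h1
    _ = (ε' : ℝ) ^ n * n.factorial := by ring
  have h3 : ‖b ^ n‖ < (ε' : ℝ) ^ n := by
    obtain ⟨m, rfl⟩ := Nat.exists_eq_add_of_le hn1
    have hk := key m
    have : ((1 + m).factorial : ℝ) * ‖b ^ (1 + m)‖ < (ε' : ℝ) ^ (1 + m) * (1 + m).factorial := by
      calc ((1 + m).factorial : ℝ) * ‖b ^ (1 + m)‖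
          = ((m + 1).factorial : ℝ) * ‖b ^ (m + 1)‖ := by rw [add_comm 1 m]
      _ ≤ C ^ (m + 1) := hk
      _ = C ^ (1 + m) := by rw [add_comm 1 m]
      _ < (ε' : ℝ) ^ (1 + m) * (1 + m).factorial := h2
    nlinarith [norm_nonneg (b ^ (1 + m)), (Nat.cast_pos (α := ℝ)).mpr (1 + m).factorial_pos]
  have h4 : (‖b ^ n‖₊ : ℝ≥0∞) ≤ ((ε' : ℝ≥0∞)) ^ n := by
    rw [← ENNReal.coe_pow, ENNReal.coe_le_coe, ← NNReal.coe_le_coe]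
    push_cast
    exact le_of_lt (lt_of_le_of_lt (le_of_eq rfl) h3)
  calc (‖b ^ n‖₊ : ℝ≥0∞) ^ (1 / n : ℝ) ≤ (((ε' : ℝ≥0∞)) ^ n) ^ (1 / n : ℝ) :=
        ENNReal.rpow_le_rpow h4 (by positivity)
  _ = (ε' : ℝ≥0∞) := by
        rw [one_div, ENNReal.pow_rpow_inv_natCast (by omega)]
  _ ≤ ε := hε'le
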